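/- Let N ≥ 1, 0 < 2s < N, 1 < p ≤ ∞ with 2s − N/p = 1. Let g ∈ L^p(B_∞) be supported in an open ball B_∞, and define ψ_H = k_{2s} * g. Then ψ_H is 'almost Lipschitz': there is C such that |ψ_H(x₁) − ψ_H(x₂)| ≤ C |x₁−x₂| log(|x₁−x₂|^{−1}) for all x₁, x₂ in any fixed bounded set with |x₁−x₂| ≤ 1/2. -/

import Mathlib

open MeasureTheory
open scoped ENNReal

open Set Metric

lemma aux_lintegral_fun_norm {E : Type*} [NormedAddCommGroup E] [NormedSpace ℝ E]
    [MeasurableSpace E] [BorelSpace E] [Nontrivial E] [FiniteDimensional ℝ E]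
    (μ : Measure E) [μ.IsAddHaarMeasure] (f : ℝ → ℝ≥0∞) (hf : Measurable f) :
    ∫⁻ x, f ‖x‖ ∂μ =
      μ.toSphere univ * ∫⁻ r in Ioi (0 : ℝ),
        ENNReal.ofReal (r ^ (Module.finrank ℝ E - 1)) * f r := by
  have h1 : ∫⁻ x, f ‖x‖ ∂μ = ∫⁻ x : ({(0:E)}ᶜ : Set E), f ‖x.1‖ ∂(μ.comap (↑)) := by
    have := setLIntegral_subtype (μ := μ) (measurableSet_singleton (0:E)).compl univ
      (fun x => f ‖x‖)
    rw [Measure.restrict_univ, Subtype.coe_image_univ] at this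
    rw [this, MeasureTheory.restrict_compl_singleton]
  rw [h1]
  have h2 : ∫⁻ x : ({(0:E)}ᶜ : Set E), f ‖x.1‖ ∂(μ.comap (↑)) =
      ∫⁻ z : sphere (0:E) 1 × Ioi (0:ℝ), f z.2
        ∂(μ.toSphere.prod (.volumeIoiPow (Module.finrank ℝ E - 1))) := by
    refine (lintegral_congr fun x => ?_).trans
      (μ.measurePreserving_homeomorphUnitSphereProd.lintegral_comp
        (hf.comp (measurable_subtype_coe.comp measurable_snd)))
    simp
  have h4 := lintegral_prod (μ := μ.toSphere)
      (ν := Measure.volumeIoiPow (Module.finrank ℝ E - 1)) (fun z => f z.2.1)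
      ((hf.comp (measurable_subtype_coe.comp measurable_snd)).aemeasurable)
  rw [h2, h4]
  simp only [lintegral_const]
  rw [mul_comm]
  congr 1
  rw [Measure.volumeIoiPow]
  have h5 := lintegral_withDensity_eq_lintegral_mul
      (Measure.comap (Subtype.val : Ioi (0:ℝ) → ℝ) volume)
      (f := fun r : Ioi (0:ℝ) => ENNReal.ofReal (r.1 ^ (Module.finrank ℝ E - 1)))
      ((measurable_subtype_coe.pow_const _).ennreal_ofReal)
      (g := fun y : Ioi (0:ℝ) => f y.1) (hf.comp measurable_subtype_coe)
  rw [h5]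
  simp only [Pi.mul_apply]
  have h3 := setLIntegral_subtype (μ := (volume : Measure ℝ)) (s := Ioi (0:ℝ)) measurableSet_Ioi univ
      (fun r : ℝ => ENNReal.ofReal (r ^ (Module.finrank ℝ E - 1)) * f r)
  rw [Measure.restrict_univ, Subtype.coe_image_univ] at h3
  exact h3

lemma aux_measurable_rpow_const (a : ℝ) : Measurable fun t : ℝ => t ^ a :=
  measurable_of_continuousOn_compl_singleton 0 fun x hx =>
    (Real.continuousAt_rpow_const x a (Or.inl hx)).continuousWithinAt

lemma aux_nontrivial {N : ℕ} (hN : 1 ≤ N) : Nontrivial (EuclideanSpace ℝ (Fin N)) := by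
  refine ⟨0, EuclideanSpace.single ⟨0, hN⟩ 1, fun h => ?_⟩
  have := congrArg (fun v => v ⟨0, hN⟩) h
  simp [EuclideanSpace.single_apply] at this

lemma aux_lintegral_ball {N : ℕ} (hN : 1 ≤ N) {β : ℝ} (hβN : -(N:ℝ) < β) {r₀ : ℝ}
    (hr₀ : 0 ≤ r₀) :
    ∫⁻ x in closedBall (0 : EuclideanSpace ℝ (Fin N)) r₀, ENNReal.ofReal (‖x‖ ^ β) =
      (volume : Measure (EuclideanSpace ℝ (Fin N))).toSphere univ *
        ENNReal.ofReal (r₀ ^ (β + N) / (β + N)) := by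
  haveI := aux_nontrivial hN
  have hβN' : (0:ℝ) < β + N := by linarith
  set f : ℝ → ℝ≥0∞ := (Iic r₀).indicator (fun t => ENNReal.ofReal (t ^ β)) with hf_def
  have hf : Measurable f :=
    ((aux_measurable_rpow_const β).ennreal_ofReal).indicator measurableSet_Iic
  have key := aux_lintegral_fun_norm (volume : Measure (EuclideanSpace ℝ (Fin N))) f hf
  have hL : ∫⁻ x : EuclideanSpace ℝ (Fin N), f ‖x‖ =
      ∫⁻ x in closedBall (0 : EuclideanSpace ℝ (Fin N)) r₀, ENNReal.ofReal (‖x‖ ^ β) := by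
    rw [← lintegral_indicator measurableSet_closedBall]
    refine lintegral_congr fun x => ?_
    by_cases hx : ‖x‖ ≤ r₀
    · rw [hf_def, indicator_of_mem (mem_Iic.2 hx), indicator_of_mem (mem_closedBall_zero_iff.2 hx)]
    · rw [hf_def, indicator_of_notMem (fun hc => hx (mem_Iic.1 hc)),
        indicator_of_notMem (fun hc => hx (mem_closedBall_zero_iff.1 hc))]
  rw [hL] at key
  rw [key, finrank_euclideanSpace_fin]
  congr 1
  have hcongr : ∀ᵐ r ∂(volume : Measure ℝ), r ∈ Ioi (0:ℝ) →
      ENNReal.ofReal (r ^ (N - 1)) * f r =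
        (Iic r₀).indicator (fun t => ENNReal.ofReal (t ^ ((N:ℝ) - 1 + β))) r := by
    refine Filter.Eventually.of_forall fun r hr => ?_
    have hr' : (0:ℝ) < r := hr
    by_cases h : r ≤ r₀
    · rw [hf_def, indicator_of_mem (mem_Iic.2 h), indicator_of_mem (mem_Iic.2 h),
        ← ENNReal.ofReal_mul (by positivity)]
      congr 1
      rw [← Real.rpow_natCast r (N-1), ← Real.rpow_add hr']
      congr 1
      push_cast [Nat.cast_sub hN]
      ring
    · rw [hf_def, indicator_of_notMem (fun hc => h (mem_Iic.1 hc)),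
        indicator_of_notMem (fun hc => h (mem_Iic.1 hc)), mul_zero]
  rw [setLIntegral_congr_fun_ae measurableSet_Ioi hcongr,
    lintegral_indicator measurableSet_Iic, Measure.restrict_restrict measurableSet_Iic,
    Set.inter_comm, Set.Ioi_inter_Iic]
  have hint : IntegrableOn (fun t : ℝ => t ^ ((N:ℝ) - 1 + β)) (Ioc 0 r₀) := by
    have := intervalIntegral.intervalIntegrable_rpow' (a := 0) (b := r₀)
      (r := (N:ℝ) - 1 + β) (by linarith)
    rwa [intervalIntegrable_iff_integrableOn_Ioc_of_le hr₀] at this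
  rw [← ofReal_integral_eq_lintegral_ofReal hint ?_]
  · congr 1
    rw [← intervalIntegral.integral_of_le hr₀, integral_rpow (Or.inl (by linarith))]
    have he : (N:ℝ) - 1 + β + 1 = β + N := by ring
    rw [he, Real.zero_rpow (ne_of_gt hβN'), sub_zero]
  · filter_upwards [ae_restrict_mem measurableSet_Ioc] with t ht
    exact Real.rpow_nonneg ht.1.le _

lemma aux_lintegral_annulus {N : ℕ} (hN : 1 ≤ N) {ε ρ : ℝ} (hε : 0 < ε) (hερ : ε ≤ ρ) :
    ∫⁻ x in {x : EuclideanSpace ℝ (Fin N) | ‖x‖ ∈ Icc ε ρ}, ENNReal.ofReal (‖x‖ ^ (-(N:ℝ))) =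
      (volume : Measure (EuclideanSpace ℝ (Fin N))).toSphere univ *
        ENNReal.ofReal (Real.log (ρ / ε)) := by
  haveI := aux_nontrivial hN
  have hρ : (0:ℝ) < ρ := lt_of_lt_of_le hε hερ
  set f : ℝ → ℝ≥0∞ := (Icc ε ρ).indicator (fun t => ENNReal.ofReal (t ^ (-(N:ℝ)))) with hf_def
  have hf : Measurable f :=
    ((aux_measurable_rpow_const _).ennreal_ofReal).indicator measurableSet_Icc
  have hAmeas : MeasurableSet {x : EuclideanSpace ℝ (Fin N) | ‖x‖ ∈ Icc ε ρ} :=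
    measurable_norm measurableSet_Icc
  have key := aux_lintegral_fun_norm (volume : Measure (EuclideanSpace ℝ (Fin N))) f hf
  have hL : ∫⁻ x : EuclideanSpace ℝ (Fin N), f ‖x‖ =
      ∫⁻ x in {x : EuclideanSpace ℝ (Fin N) | ‖x‖ ∈ Icc ε ρ},
        ENNReal.ofReal (‖x‖ ^ (-(N:ℝ))) := by
    rw [← lintegral_indicator hAmeas]
    refine lintegral_congr fun x => ?_
    by_cases hx : ‖x‖ ∈ Icc ε ρ
    · rw [hf_def, indicator_of_mem hx, indicator_of_mem
        (show x ∈ {x : EuclideanSpace ℝ (Fin N) | ‖x‖ ∈ Icc ε ρ} from hx)]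
    · rw [hf_def, indicator_of_notMem hx, indicator_of_notMem
        (show x ∉ {x : EuclideanSpace ℝ (Fin N) | ‖x‖ ∈ Icc ε ρ} from hx)]
  rw [hL] at key
  rw [key, finrank_euclideanSpace_fin]
  congr 1
  have hcongr : ∀ᵐ r ∂(volume : Measure ℝ), r ∈ Ioi (0:ℝ) →
      ENNReal.ofReal (r ^ (N - 1)) * f r =
        (Icc ε ρ).indicator (fun t => ENNReal.ofReal t⁻¹) r := by
    refine Filter.Eventually.of_forall fun r hr => ?_
    have hr' : (0:ℝ) < r := hr
    by_cases h : r ∈ Icc ε ρ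
    · rw [hf_def, indicator_of_mem h, indicator_of_mem h,
        ← ENNReal.ofReal_mul (by positivity)]
      congr 1
      rw [← Real.rpow_natCast r (N-1), ← Real.rpow_add hr']
      have he : ((N:ℕ) - 1 : ℕ) + (-(N:ℝ)) = -1 := by
        push_cast [Nat.cast_sub hN]; ring
      rw [he, Real.rpow_neg_one]
    · rw [hf_def, indicator_of_notMem h, indicator_of_notMem h, mul_zero]
  rw [setLIntegral_congr_fun_ae measurableSet_Ioi hcongr,
    lintegral_indicator measurableSet_Icc, Measure.restrict_restrict measurableSet_Icc,
    Set.inter_eq_self_of_subset_left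
      (show Icc ε ρ ⊆ Ioi (0:ℝ) from fun t ht => lt_of_lt_of_le hε ht.1),
    ← Measure.restrict_congr_set Ioc_ae_eq_Icc]
  have hint : IntegrableOn (fun t : ℝ => t⁻¹) (Ioc ε ρ) := by
    have := intervalIntegral.intervalIntegrable_inv (a := ε) (b := ρ) (μ := volume)
      (f := fun t : ℝ => t)
      (fun x hx => by
        have := hx.1
        rw [uIcc_of_le hερ] at hx
        exact ne_of_gt (lt_of_lt_of_le hε hx.1))
      (continuousOn_id)
    rwa [intervalIntegrable_iff_integrableOn_Ioc_of_le hερ] at this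
  rw [← ofReal_integral_eq_lintegral_ofReal hint ?_]
  · congr 1
    rw [← intervalIntegral.integral_of_le hερ, integral_inv]
    exact Set.notMem_uIcc_of_lt hε hρ
  · filter_upwards [ae_restrict_mem measurableSet_Ioc] with t ht
    exact inv_nonneg.2 (le_of_lt (lt_of_lt_of_le hε ht.1.le))

lemma aux_mvt {a : ℝ} (ha : a < 0) {r₁ r₂ δ : ℝ} (hδ : 0 < δ) (h1 : 2*δ ≤ r₁)
    (h2 : |r₂ - r₁| ≤ δ) :
    |r₁ ^ a - r₂ ^ a| ≤ (|a| * 2 ^ (1-a) * r₁ ^ (a-1)) * δ := by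
  have hr₁ : 0 < r₁ := by linarith
  have hm : 0 < r₁ / 2 := by linarith
  have hr₂ : r₁ / 2 ≤ r₂ := by
    have := abs_le.1 h2
    linarith [this.1]
  set C : ℝ := |a| * (r₁/2) ^ (a-1) with hC
  have hderiv : ∀ t ∈ Ici (r₁/2), HasDerivWithinAt (fun t : ℝ => t ^ a)
      (a * t ^ (a-1)) (Ici (r₁/2)) t := fun t ht =>
    (Real.hasDerivAt_rpow_const (Or.inl (ne_of_gt (lt_of_lt_of_le hm ht)))).hasDerivWithinAt
  have hbound : ∀ t ∈ Ici (r₁/2), ‖a * t ^ (a-1)‖ ≤ C := by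
    intro t ht
    rw [Real.norm_eq_abs, abs_mul, abs_of_nonneg (Real.rpow_nonneg (le_of_lt (lt_of_lt_of_le hm ht)) _)]
    exact mul_le_mul_of_nonneg_left
      (Real.rpow_le_rpow_of_nonpos hm ht (by linarith)) (abs_nonneg a)
  have key := Convex.norm_image_sub_le_of_norm_hasDerivWithin_le (x := r₁) (y := r₂)
    hderiv hbound (convex_Ici _) (mem_Ici.2 (by linarith : r₁ / 2 ≤ r₁)) (mem_Ici.2 hr₂)
  rw [Real.norm_eq_abs, Real.norm_eq_abs, abs_sub_comm] at key
  have hCeq : C = |a| * 2 ^ (1-a) * r₁ ^ (a-1) := by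
    rw [hC, Real.div_rpow hr₁.le (by norm_num : (0:ℝ) ≤ 2), div_eq_mul_inv,
      ← Real.rpow_neg (by norm_num : (0:ℝ) ≤ 2), neg_sub]
    ring
  calc |r₁ ^ a - r₂ ^ a| ≤ C * |r₂ - r₁| := key
    _ ≤ C * δ := by
        refine mul_le_mul_of_nonneg_left h2 ?_
        exact mul_nonneg (abs_nonneg _) (Real.rpow_nonneg hm.le _)
    _ = (|a| * 2 ^ (1-a) * r₁ ^ (a-1)) * δ := by rw [hCeq]

lemma aux_translate {N : ℕ} (x : EuclideanSpace ℝ (Fin N)) (f : EuclideanSpace ℝ (Fin N) → ℝ≥0∞)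
    (A : Set (EuclideanSpace ℝ (Fin N))) :
    ∫⁻ y in (fun y => x - y) ⁻¹' A, f (x - y) = ∫⁻ z in A, f z := by
  exact (Measure.measurePreserving_sub_left volume x).setLIntegral_comp_preimage_emb
    (Homeomorph.measurableEmbedding (Homeomorph.subLeft x)) f A

lemma aux_eLpNorm_union {α : Type*} [MeasurableSpace α] (μ : Measure α) (f : α → ℝ)
    {q : ℝ≥0∞} (hq1 : 1 ≤ q) (hqtop : q ≠ ∞) (A B : Set α) :
    eLpNorm f q (μ.restrict (A ∪ B)) ≤
      eLpNorm f q (μ.restrict A) + eLpNorm f q (μ.restrict B) := by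
  have hq0 : q ≠ 0 := (lt_of_lt_of_le zero_lt_one hq1).ne'
  have hqr : 0 < q.toReal := ENNReal.toReal_pos hq0 hqtop
  have hqr1 : 1 ≤ q.toReal := by
    have := ENNReal.toReal_mono hqtop hq1
    simpa using this
  rw [eLpNorm_eq_lintegral_rpow_enorm_toReal hq0 hqtop, eLpNorm_eq_lintegral_rpow_enorm_toReal hq0 hqtop,
    eLpNorm_eq_lintegral_rpow_enorm_toReal hq0 hqtop]
  have hmono : (∫⁻ x, (‖f x‖₊ : ℝ≥0∞) ^ q.toReal ∂(μ.restrict (A ∪ B))) ≤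
      (∫⁻ x, (‖f x‖₊ : ℝ≥0∞) ^ q.toReal ∂(μ.restrict A)) +
      (∫⁻ x, (‖f x‖₊ : ℝ≥0∞) ^ q.toReal ∂(μ.restrict B)) := by
    rw [← lintegral_add_measure]
    exact lintegral_mono' (Measure.restrict_union_le _ _) le_rfl
  calc (∫⁻ x, (‖f x‖₊ : ℝ≥0∞) ^ q.toReal ∂(μ.restrict (A ∪ B))) ^ (1 / q.toReal)
      ≤ ((∫⁻ x, (‖f x‖₊ : ℝ≥0∞) ^ q.toReal ∂(μ.restrict A)) +
        (∫⁻ x, (‖f x‖₊ : ℝ≥0∞) ^ q.toReal ∂(μ.restrict B))) ^ (1 / q.toReal) :=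
        ENNReal.rpow_le_rpow hmono (by positivity)
    _ ≤ _ := by
        refine ENNReal.rpow_add_le_add_rpow _ _ (by positivity) ?_
        rw [div_le_one hqr]
        linarith

lemma aux_pow_le {X : ℝ≥0∞} {u qr : ℝ} (hqr : 0 < qr) (hu : 0 ≤ u)
    (hX : X ≤ ENNReal.ofReal (u ^ qr)) : X ^ (1/qr) ≤ ENNReal.ofReal u := by
  calc X ^ (1/qr) ≤ (ENNReal.ofReal (u ^ qr)) ^ (1/qr) :=
        ENNReal.rpow_le_rpow hX (by positivity)
    _ = ENNReal.ofReal ((u ^ qr) ^ (1/qr)) :=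
        ENNReal.ofReal_rpow_of_nonneg (Real.rpow_nonneg hu _) (by positivity)
    _ = ENNReal.ofReal u := by
        rw [← Real.rpow_mul hu, mul_one_div, div_self hqr.ne', Real.rpow_one]

lemma aux_eLpNorm_nonneg_eq {α : Type*} [MeasurableSpace α] (μ : Measure α) (f : α → ℝ)
    (hf : ∀ y, 0 ≤ f y) {q : ℝ≥0∞} (hq0 : q ≠ 0) (hqtop : q ≠ ∞) :
    eLpNorm f q μ = (∫⁻ y, ENNReal.ofReal (f y ^ q.toReal) ∂μ) ^ (1 / q.toReal) := by
  rw [eLpNorm_eq_lintegral_rpow_enorm_toReal hq0 hqtop]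
  congr 1
  refine lintegral_congr fun y => ?_
  rw [← ofReal_norm, Real.norm_eq_abs, abs_of_nonneg (hf y),
    ENNReal.ofReal_rpow_of_nonneg (hf y) ENNReal.toReal_nonneg]

lemma aux_lint_ker_ball {N : ℕ} (hN : 1 ≤ N) {β : ℝ} (hβN : -(N:ℝ) < β)
    (x : EuclideanSpace ℝ (Fin N)) {S : Set (EuclideanSpace ℝ (Fin N))} {r₀ : ℝ}
    (hr₀ : 0 ≤ r₀) (hS : ∀ y ∈ S, ‖x - y‖ ≤ r₀) :
    ∫⁻ y in S, ENNReal.ofReal (‖x - y‖ ^ β) ≤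
      (volume : Measure (EuclideanSpace ℝ (Fin N))).toSphere univ *
        ENNReal.ofReal (r₀ ^ (β + N) / (β + N)) := by
  have hsub : S ⊆ (fun y => x - y) ⁻¹' closedBall (0 : EuclideanSpace ℝ (Fin N)) r₀ :=
    fun y hy => by simpa [mem_closedBall_zero_iff] using hS y hy
  calc ∫⁻ y in S, ENNReal.ofReal (‖x - y‖ ^ β)
      ≤ ∫⁻ y in (fun y => x - y) ⁻¹' closedBall (0 : EuclideanSpace ℝ (Fin N)) r₀,
          ENNReal.ofReal (‖x - y‖ ^ β) := lintegral_mono_set hsub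
    _ = ∫⁻ z in closedBall (0 : EuclideanSpace ℝ (Fin N)) r₀, ENNReal.ofReal (‖z‖ ^ β) :=
        aux_translate x (fun z => ENNReal.ofReal (‖z‖ ^ β)) _
    _ = _ := aux_lintegral_ball hN hβN hr₀

lemma aux_lint_ker_annulus {N : ℕ} (hN : 1 ≤ N) (x : EuclideanSpace ℝ (Fin N))
    {S : Set (EuclideanSpace ℝ (Fin N))} {ε ρ : ℝ} (hε : 0 < ε) (hερ : ε ≤ ρ)
    (hS : ∀ y ∈ S, ε ≤ ‖x - y‖ ∧ ‖x - y‖ ≤ ρ) :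
    ∫⁻ y in S, ENNReal.ofReal (‖x - y‖ ^ (-(N:ℝ))) ≤
      (volume : Measure (EuclideanSpace ℝ (Fin N))).toSphere univ *
        ENNReal.ofReal (Real.log (ρ / ε)) := by
  have hsub : S ⊆ (fun y => x - y) ⁻¹' {z : EuclideanSpace ℝ (Fin N) | ‖z‖ ∈ Icc ε ρ} :=
    fun y hy => by
      have := hS y hy
      simpa [mem_Icc] using this
  calc ∫⁻ y in S, ENNReal.ofReal (‖x - y‖ ^ (-(N:ℝ)))
      ≤ ∫⁻ y in (fun y => x - y) ⁻¹' {z : EuclideanSpace ℝ (Fin N) | ‖z‖ ∈ Icc ε ρ},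
          ENNReal.ofReal (‖x - y‖ ^ (-(N:ℝ))) := lintegral_mono_set hsub
    _ = ∫⁻ z in {z : EuclideanSpace ℝ (Fin N) | ‖z‖ ∈ Icc ε ρ},
          ENNReal.ofReal (‖z‖ ^ (-(N:ℝ))) :=
        aux_translate x (fun z => ENNReal.ofReal (‖z‖ ^ (-(N:ℝ)))) _
    _ = _ := aux_lintegral_annulus hN hε hερ

/-- The Riesz kernel `k_{2s}(x) = D_{N,s}|x|^{2s−N}` for `2s < N`. -/
noncomputable def rieszKernel (N : ℕ) (s : ℝ) (x : EuclideanSpace ℝ (Fin N)) : ℝ :=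
  (Real.pi ^ (-(N : ℝ) / 2) * 2 ^ (-(2 * s)) *
    Real.Gamma (((N : ℝ) - 2 * s) / 2) / Real.Gamma s) * ‖x‖ ^ (2 * s - (N : ℝ))

set_option maxHeartbeats 2000000 in
/-- Endpoint case `2s − N/p = 1`: the Riesz potential `ψ_H = k_{2s} * g` of `g ∈ L^p`
supported in a ball is almost Lipschitz, with a logarithmic correction factor, on any
fixed bounded set. -/
theorem riesz_potential_almost_lipschitz (N : ℕ) (hN : 1 ≤ N) (s : ℝ) (hs : 0 < s)
    (hsN : 2 * s < (N : ℝ)) (p : ℝ≥0∞) (hp : 1 < p)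
    (hend : 2 * s - (N : ℝ) * (1 / p).toReal = 1)
    (c : EuclideanSpace ℝ (Fin N)) (R : ℝ) (hR : 0 < R)
    (g : EuclideanSpace ℝ (Fin N) → ℝ)
    (hsupp : Function.support g ⊆ Metric.ball c R)
    (hg : MemLp g p) :
    ∀ K : Set (EuclideanSpace ℝ (Fin N)), Bornology.IsBounded K →
      ∃ C : ℝ, ∀ x₁ ∈ K, ∀ x₂ ∈ K, ‖x₁ - x₂‖ ≤ 1 / 2 →
        |(∫ y : EuclideanSpace ℝ (Fin N), rieszKernel N s (x₁ - y) * g y) -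
            (∫ y : EuclideanSpace ℝ (Fin N), rieszKernel N s (x₂ - y) * g y)|
          ≤ C * ‖x₁ - x₂‖ * Real.log (‖x₁ - x₂‖⁻¹) := by
  classical
  intro K hK
  haveI := aux_nontrivial hN
  -- kernel structure
  set a : ℝ := 2 * s - (N : ℝ) with ha_def
  have ha_neg : a < 0 := by rw [ha_def]; linarith
  set D : ℝ := Real.pi ^ (-(N : ℝ) / 2) * 2 ^ (-(2 * s)) *
    Real.Gamma (((N : ℝ) - 2 * s) / 2) / Real.Gamma s with hD_def
  have hker : ∀ z : EuclideanSpace ℝ (Fin N), rieszKernel N s z = D * ‖z‖ ^ a := fun z => rfl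
  -- exponents
  set q : ℝ≥0∞ := (1 - 1/p)⁻¹ with hq_def
  have hip_lt : 1/p < 1 := by rw [one_div]; exact ENNReal.inv_lt_one.2 hp
  have hq_ne_top : q ≠ ∞ := by
    rw [hq_def, Ne, ENNReal.inv_eq_top, tsub_eq_zero_iff_le]
    exact fun hcon => absurd hcon (not_le.2 hip_lt)
  have hq1 : (1:ℝ≥0∞) ≤ q := by
    rw [hq_def]
    exact ENNReal.one_le_inv.2 tsub_le_self
  have hq0 : q ≠ 0 := (lt_of_lt_of_le zero_lt_one hq1).ne'
  set qr : ℝ := q.toReal with hqr_def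
  have hqr1 : 1 ≤ qr := by
    have := ENNReal.toReal_mono hq_ne_top hq1
    simpa using this
  have hqr0 : 0 < qr := lt_of_lt_of_le zero_lt_one hqr1
  set ip : ℝ := (1/p).toReal with hip_def
  have hiq : 1/qr = 1 - ip := by
    have h1 : (1/q : ℝ≥0∞) = 1 - 1/p := by rw [hq_def, one_div, inv_inv]
    have h2 : (1/q : ℝ≥0∞).toReal = 1/qr := by
      rw [one_div, ENNReal.toReal_inv, hqr_def, one_div]
    rw [← h2, h1, ENNReal.toReal_sub_of_le hip_lt.le ENNReal.one_ne_top]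
    simp [hip_def]
  have hip_eq : ip = 1 - 1/qr := by linarith
  have key_a : a * qr = qr - N := by
    have h6 : a = 1 + (N:ℝ) * ip - N := by rw [ha_def]; linarith
    rw [h6, hip_eq]
    field_simp
    ring
  have key_a' : a * qr + N = qr := by linarith
  have key_b : (a - 1) * qr = -(N:ℝ) := by
    have : (a - 1) * qr = a * qr - qr := by ring
    rw [this, key_a]; ring
  have hβN : -(N:ℝ) < a * qr := by rw [key_a]; linarith
  -- geometry
  obtain ⟨M₀, hM₀⟩ := hK.subset_closedBall 0
  set M : ℝ := max 1 (max M₀ (‖c‖ + R)) with hM_def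
  have hM1 : 1 ≤ M := le_max_left _ _
  have hM0 : 0 < M := lt_of_lt_of_le zero_lt_one hM1
  have hKM : K ⊆ Metric.closedBall 0 M :=
    hM₀.trans (Metric.closedBall_subset_closedBall ((le_max_left _ _).trans (le_max_right _ _)))
  have hBM : Metric.ball c R ⊆ Metric.closedBall (0 : EuclideanSpace ℝ (Fin N)) M := by
    intro y hy
    rw [Metric.mem_closedBall, dist_zero_right]
    have : ‖y - c‖ < R := by rw [← dist_eq_norm]; exact hy
    calc ‖y‖ = ‖c + (y - c)‖ := by rw [add_sub_cancel]
      _ ≤ ‖c‖ + ‖y - c‖ := norm_add_le _ _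
      _ ≤ ‖c‖ + R := by linarith
      _ ≤ M := (le_max_right _ _).trans (le_max_right _ _)
  -- constants
  have hSfin : (volume : Measure (EuclideanSpace ℝ (Fin N))).toSphere univ ≠ ⊤ :=
    measure_ne_top _ _
  set Sr : ℝ := ((volume : Measure (EuclideanSpace ℝ (Fin N))).toSphere univ).toReal
    with hSr_def
  have hSr_eq : (volume : Measure (EuclideanSpace ℝ (Fin N))).toSphere univ =
      ENNReal.ofReal Sr := (ENNReal.ofReal_toReal hSfin).symm
  have hSr0 : 0 ≤ Sr := ENNReal.toReal_nonneg
  set c₄ : ℝ := max 1 Sr with hc₄_def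
  have hc₄1 : 1 ≤ c₄ := le_max_left _ _
  have hc₄0 : 0 < c₄ := lt_of_lt_of_le zero_lt_one hc₄1
  have hlog2 : 0 < Real.log 2 := Real.log_pos one_lt_two
  set C₁ : ℝ := |D| * (5 * c₄) with hC₁_def
  have hC₁0 : 0 ≤ C₁ := by positivity
  set c₅ : ℝ := |D| * (|a| * 2 ^ (1 - a)) with hc₅_def
  have hc₅0 : 0 ≤ c₅ := by positivity
  set c₆ : ℝ := 1 / Real.log 2 + Sr * (Real.log M / Real.log 2 + 1) with hc₆_def
  have hlogM : 0 ≤ Real.log M := Real.log_nonneg hM1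
  have hc₆0 : 0 ≤ c₆ := by positivity
  set C₂ : ℝ := c₅ * c₆ with hC₂_def
  have hC₂0 : 0 ≤ C₂ := by positivity
  set C₀ : ℝ := C₁ / Real.log 2 + C₂ with hC₀_def
  have hC₀0 : 0 ≤ C₀ := by positivity
  -- measurability
  have hg_meas : AEStronglyMeasurable g volume := hg.1
  have hker_meas : ∀ x : EuclideanSpace ℝ (Fin N),
      Measurable (fun y => rieszKernel N s (x - y)) := by
    intro x
    have h1 : Measurable (fun y : EuclideanSpace ℝ (Fin N) => ‖x - y‖ ^ a) :=
      (aux_measurable_rpow_const a).comp ((measurable_const.sub measurable_id).norm)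
    have h2 : (fun y : EuclideanSpace ℝ (Fin N) => rieszKernel N s (x - y)) =
        fun y => D * ‖x - y‖ ^ a := by
      funext y; exact hker _
    rw [h2]
    exact h1.const_mul D
  have hrpow_meas : ∀ x : EuclideanSpace ℝ (Fin N), ∀ b : ℝ,
      Measurable (fun y : EuclideanSpace ℝ (Fin N) => ‖x - y‖ ^ b) := fun x b =>
    (aux_measurable_rpow_const b).comp ((measurable_const.sub measurable_id).norm)
  -- eLpNorm of kernel over small sets
  have ker_eLp_ball : ∀ (x : EuclideanSpace ℝ (Fin N)) (S : Set (EuclideanSpace ℝ (Fin N)))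
      (r : ℝ), 0 ≤ r → (∀ y ∈ S, ‖x - y‖ ≤ r) →
      eLpNorm (fun y => ‖x - y‖ ^ a) q (volume.restrict S) ≤ ENNReal.ofReal (c₄ * r) := by
    intro x S r hr hS
    rw [aux_eLpNorm_nonneg_eq _ _ (fun y => Real.rpow_nonneg (norm_nonneg _) _) hq0 hq_ne_top]
    apply aux_pow_le hqr0 (by positivity)
    have heq : (∫⁻ y in S, ENNReal.ofReal ((‖x - y‖ ^ a) ^ q.toReal)) =
        ∫⁻ y in S, ENNReal.ofReal (‖x - y‖ ^ (a * qr)) := by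
      refine lintegral_congr fun y => ?_
      rw [Real.rpow_mul (norm_nonneg _)]
    rw [heq]
    calc (∫⁻ y in S, ENNReal.ofReal (‖x - y‖ ^ (a * qr)))
        ≤ (volume : Measure (EuclideanSpace ℝ (Fin N))).toSphere univ *
            ENNReal.ofReal (r ^ (a * qr + N) / (a * qr + N)) :=
          aux_lint_ker_ball hN hβN x hr hS
      _ ≤ ENNReal.ofReal ((c₄ * r) ^ qr) := by
          rw [key_a', hSr_eq, ← ENNReal.ofReal_mul hSr0]
          apply ENNReal.ofReal_le_ofReal
          have h₁ : r ^ qr / qr ≤ r ^ qr :=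
            div_le_self (Real.rpow_nonneg hr _) hqr1
          have h₂ : Sr ≤ c₄ ^ qr := by
            calc Sr ≤ c₄ := le_max_right _ _
              _ = c₄ ^ (1:ℝ) := (Real.rpow_one _).symm
              _ ≤ c₄ ^ qr := Real.rpow_le_rpow_of_exponent_le hc₄1 hqr1
          calc Sr * (r ^ qr / qr) ≤ c₄ ^ qr * r ^ qr :=
                mul_le_mul h₂ h₁ (by positivity) (by positivity)
            _ = (c₄ * r) ^ qr := (Real.mul_rpow (by positivity) hr).symm
  -- integrability
  have hzero : ∀ (x : EuclideanSpace ℝ (Fin N)) (y : EuclideanSpace ℝ (Fin N)),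
      y ∉ Metric.ball c R → rieszKernel N s (x - y) * g y = 0 := by
    intro x y hy
    have : g y = 0 := by
      by_contra hgy
      exact hy (hsupp (Function.mem_support.2 hgy))
    rw [this, mul_zero]
  have holder : ∀ (x : EuclideanSpace ℝ (Fin N)) (S : Set (EuclideanSpace ℝ (Fin N))),
      eLpNorm (fun y => rieszKernel N s (x - y) * g y) 1 (volume.restrict S) ≤
        eLpNorm (fun y => rieszKernel N s (x - y)) q (volume.restrict S) *
          eLpNorm g p (volume.restrict S) := by
    intro x S
    have hpq1 : (1:ℝ≥0∞)/1 = 1/q + 1/p := by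
      have h1q : 1/q = 1 - 1/p := by rw [hq_def, one_div ((1 - 1/p)⁻¹), inv_inv]
      rw [h1q, tsub_add_cancel_of_le hip_lt.le]
      norm_num
    have hsg : (fun y => rieszKernel N s (x - y) * g y) =
        (fun y => rieszKernel N s (x - y)) • g := by
      funext y
      simp [Pi.smul_apply', smul_eq_mul]
    rw [hsg]
    exact eLpNorm_smul_le_mul_eLpNorm hg_meas.restrict
      ((hker_meas x).aestronglyMeasurable.restrict)
        (hpqr := ⟨by simpa [one_div] using hpq1.symm⟩)
  have ker_eLp_fin : ∀ x ∈ Metric.closedBall (0 : EuclideanSpace ℝ (Fin N)) M,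
      eLpNorm (fun y => rieszKernel N s (x - y)) q (volume.restrict (Metric.ball c R)) ≤
        ENNReal.ofReal |D| * ENNReal.ofReal (c₄ * (2*M)) := by
    intro x hx
    have h2 : (fun y : EuclideanSpace ℝ (Fin N) => rieszKernel N s (x - y)) =
        D • fun y => ‖x - y‖ ^ a := by
      funext y; exact hker _
    rw [h2, eLpNorm_const_smul]
    have hD_eq : (‖D‖ₑ : ℝ≥0∞) = ENNReal.ofReal |D| := by
      rw [← ofReal_norm, Real.norm_eq_abs]
    rw [hD_eq]
    refine mul_le_mul_right (ker_eLp_ball x _ (2*M) (by positivity) ?_) _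
    intro y hy
    have hxM : ‖x‖ ≤ M := mem_closedBall_zero_iff.1 hx
    have hyM : ‖y‖ ≤ M := mem_closedBall_zero_iff.1 (hBM hy)
    calc ‖x - y‖ ≤ ‖x‖ + ‖y‖ := norm_sub_le _ _
      _ ≤ 2*M := by linarith
  have hg_restrict : ∀ S : Set (EuclideanSpace ℝ (Fin N)),
      eLpNorm g p (volume.restrict S) ≤ eLpNorm g p volume := fun S =>
    eLpNorm_mono_measure g Measure.restrict_le_self
  have hInt : ∀ x ∈ Metric.closedBall (0 : EuclideanSpace ℝ (Fin N)) M,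
      Integrable (fun y => rieszKernel N s (x - y) * g y) volume := by
    intro x hx
    have hio : IntegrableOn (fun y => rieszKernel N s (x - y) * g y)
        (Metric.ball c R) volume := by
      rw [IntegrableOn, ← memLp_one_iff_integrable]
      refine ⟨((hker_meas x).aestronglyMeasurable.mul hg_meas).restrict, ?_⟩
      calc eLpNorm (fun y => rieszKernel N s (x - y) * g y) 1
            (volume.restrict (Metric.ball c R))
          ≤ eLpNorm (fun y => rieszKernel N s (x - y)) q
              (volume.restrict (Metric.ball c R)) *
            eLpNorm g p (volume.restrict (Metric.ball c R)) := holder x _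
        _ ≤ (ENNReal.ofReal |D| * ENNReal.ofReal (c₄ * (2*M))) * eLpNorm g p volume :=
            mul_le_mul' (ker_eLp_fin x hx) (hg_restrict _)
        _ < ⊤ := by
            apply ENNReal.mul_lt_top
            · exact (ENNReal.mul_lt_top ENNReal.ofReal_lt_top ENNReal.ofReal_lt_top)
            · exact hg.2
    exact hio.integrable_of_forall_notMem_eq_zero (hzero x)
  -- the constant
  set G : ℝ := (eLpNorm g p volume).toReal with hG_def
  have hG0 : 0 ≤ G := ENNReal.toReal_nonneg
  refine ⟨C₀ * G, ?_⟩
  intro x₁ hx₁ x₂ hx₂ hd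
  by_cases hx12 : x₁ = x₂
  · subst hx12
    simp
  have hpos : (0:ℝ) < ‖x₁ - x₂‖ := by
    rw [norm_pos_iff]
    exact sub_ne_zero.2 hx12
  set h : ℝ := ‖x₁ - x₂‖ with hh_def
  have hhalf : h ≤ 1/2 := hd
  have hlogh : Real.log 2 ≤ Real.log h⁻¹ := by
    apply Real.log_le_log zero_lt_two
    rw [← one_div]
    rw [le_div_iff₀ hpos]
    linarith
  have hlogh0 : 0 < Real.log h⁻¹ := lt_of_lt_of_le hlog2 hlogh
  -- the difference kernel
  set Δ : EuclideanSpace ℝ (Fin N) → ℝ :=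
    fun y => rieszKernel N s (x₁ - y) - rieszKernel N s (x₂ - y) with hΔ_def
  have hΔ_meas : Measurable Δ := (hker_meas x₁).sub (hker_meas x₂)
  have hInt1 := hInt x₁ (hKM hx₁)
  have hInt2 := hInt x₂ (hKM hx₂)
  have e1 : ∀ y, Δ y * g y =
      rieszKernel N s (x₁ - y) * g y - rieszKernel N s (x₂ - y) * g y := fun y => by
    simp only [hΔ_def]; ring
  have hcomplz : ∀ y ∉ Metric.ball c R, Δ y * g y = 0 := by
    intro y hy
    have hg0 : g y = 0 := by
      by_contra hgy
      exact hy (hsupp (Function.mem_support.2 hgy))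
    rw [hg0, mul_zero]
  have step1 : (∫ y, rieszKernel N s (x₁ - y) * g y) -
      (∫ y, rieszKernel N s (x₂ - y) * g y) = ∫ y in Metric.ball c R, Δ y * g y := by
    rw [setIntegral_eq_integral_of_forall_compl_eq_zero hcomplz, ← integral_sub hInt1 hInt2]
    exact integral_congr_ae (Filter.Eventually.of_forall fun y => (e1 y).symm)
  have step2 : |∫ y in Metric.ball c R, Δ y * g y| ≤
      (eLpNorm (fun y => Δ y * g y) 1 (volume.restrict (Metric.ball c R))).toReal := by
    have h1 := norm_integral_le_lintegral_norm (μ := volume.restrict (Metric.ball c R))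
      (fun y => Δ y * g y)
    rw [Real.norm_eq_abs] at h1
    refine h1.trans (le_of_eq ?_)
    congr 1
    rw [eLpNorm_one_eq_lintegral_enorm]
    exact lintegral_congr fun y => ofReal_norm _
  suffices hfinal : eLpNorm (fun y => Δ y * g y) 1 (volume.restrict (Metric.ball c R)) ≤
      ENNReal.ofReal (C₀ * h * Real.log h⁻¹) * eLpNorm g p volume by
    rw [step1]
    refine step2.trans ?_
    have hfin : ENNReal.ofReal (C₀ * h * Real.log h⁻¹) * eLpNorm g p volume ≠ ⊤ :=
      ENNReal.mul_ne_top ENNReal.ofReal_ne_top hg.2.ne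
    refine (ENNReal.toReal_mono hfin hfinal).trans (le_of_eq ?_)
    rw [ENNReal.toReal_mul, ENNReal.toReal_ofReal (by positivity), ← hG_def]
    ring
  -- Hölder
  have hpq1 : (1:ℝ≥0∞)/1 = 1/q + 1/p := by
    have h1q : 1/q = 1 - 1/p := by rw [hq_def, one_div ((1 - 1/p)⁻¹), inv_inv]
    rw [h1q, tsub_add_cancel_of_le hip_lt.le]
    norm_num
  have hH : eLpNorm (fun y => Δ y * g y) 1 (volume.restrict (Metric.ball c R)) ≤
      eLpNorm Δ q (volume.restrict (Metric.ball c R)) *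
        eLpNorm g p (volume.restrict (Metric.ball c R)) := by
    have hsg : (fun y => Δ y * g y) = Δ • g := by
      funext y
      simp [Pi.smul_apply', smul_eq_mul]
    rw [hsg]
    exact eLpNorm_smul_le_mul_eLpNorm hg_meas.restrict
      hΔ_meas.aestronglyMeasurable.restrict (hpqr := ⟨by simpa [one_div] using hpq1.symm⟩)
  refine hH.trans ?_
  refine mul_le_mul' ?_ (hg_restrict _)
  -- split into near and far
  set A₁ : Set (EuclideanSpace ℝ (Fin N)) := Metric.ball x₁ (2*h) with hA₁_def
  set A₂ : Set (EuclideanSpace ℝ (Fin N)) :=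
    Metric.ball c R \ Metric.ball x₁ (2*h) with hA₂_def
  have hA₁r : ∀ y ∈ A₁, ‖x₁ - y‖ ≤ 2*h := by
    intro y hy
    have h' := Metric.mem_ball.1 hy
    rw [dist_comm] at h'
    rw [← dist_eq_norm]
    exact h'.le
  have hA₂r : ∀ y ∈ A₂, 2*h ≤ ‖x₁ - y‖ := by
    intro y hy
    have h' : ¬ dist y x₁ < 2*h := fun hc => hy.2 (Metric.mem_ball.2 hc)
    rw [dist_comm] at h'
    rw [← dist_eq_norm]
    exact not_lt.1 h'
  have hcover : Metric.ball c R ⊆ A₁ ∪ A₂ := by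
    intro y hy
    by_cases h' : y ∈ Metric.ball x₁ (2*h)
    · exact Or.inl h'
    · exact Or.inr ⟨hy, h'⟩
  have hsplit : eLpNorm Δ q (volume.restrict (Metric.ball c R)) ≤
      eLpNorm Δ q (volume.restrict A₁) + eLpNorm Δ q (volume.restrict A₂) := by
    refine (eLpNorm_mono_measure Δ (Measure.restrict_mono hcover le_rfl)).trans ?_
    exact aux_eLpNorm_union volume Δ hq1 hq_ne_top A₁ A₂
  have e2 : ∀ x : EuclideanSpace ℝ (Fin N),
      (fun y => rieszKernel N s (x - y)) = D • fun y => ‖x - y‖ ^ a := by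
    intro x; funext y; exact hker _
  have hD_eq : (‖D‖ₑ : ℝ≥0∞) = ENNReal.ofReal |D| := by
    rw [← ofReal_norm, Real.norm_eq_abs]
  -- near field estimate
  have hT1 : eLpNorm Δ q (volume.restrict A₁) ≤ ENNReal.ofReal (C₁ * h) := by
    have hsub : Δ = (fun y => rieszKernel N s (x₁ - y)) -
        fun y => rieszKernel N s (x₂ - y) := by
      funext y; simp [hΔ_def]
    have h1 : eLpNorm Δ q (volume.restrict A₁) ≤
        eLpNorm (fun y => rieszKernel N s (x₁ - y)) q (volume.restrict A₁) +
        eLpNorm (fun y => rieszKernel N s (x₂ - y)) q (volume.restrict A₁) := by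
      rw [hsub]
      exact eLpNorm_sub_le ((hker_meas x₁).aestronglyMeasurable.restrict)
        ((hker_meas x₂).aestronglyMeasurable.restrict) hq1
    have hb2 : ∀ y ∈ A₁, ‖x₂ - y‖ ≤ 3*h := by
      intro y hy
      have h1' := hA₁r y hy
      have he : x₂ - y = -(x₁ - x₂) + (x₁ - y) := by abel
      calc ‖x₂ - y‖ = ‖-(x₁ - x₂) + (x₁ - y)‖ := by rw [he]
        _ ≤ ‖-(x₁ - x₂)‖ + ‖x₁ - y‖ := norm_add_le _ _
        _ = h + ‖x₁ - y‖ := by rw [norm_neg]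
        _ ≤ h + 2*h := by linarith
        _ = 3*h := by ring
    have hterm1 : eLpNorm (fun y => rieszKernel N s (x₁ - y)) q (volume.restrict A₁) ≤
        ENNReal.ofReal |D| * ENNReal.ofReal (c₄ * (2*h)) := by
      rw [e2 x₁, eLpNorm_const_smul, hD_eq]
      exact mul_le_mul_right (ker_eLp_ball x₁ A₁ (2*h) (by positivity) hA₁r) _
    have hterm2 : eLpNorm (fun y => rieszKernel N s (x₂ - y)) q (volume.restrict A₁) ≤
        ENNReal.ofReal |D| * ENNReal.ofReal (c₄ * (3*h)) := by
      rw [e2 x₂, eLpNorm_const_smul, hD_eq]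
      exact mul_le_mul_right (ker_eLp_ball x₂ A₁ (3*h) (by positivity) hb2) _
    refine h1.trans ((add_le_add hterm1 hterm2).trans (le_of_eq ?_))
    rw [← ENNReal.ofReal_mul (abs_nonneg D), ← ENNReal.ofReal_mul (abs_nonneg D),
      ← ENNReal.ofReal_add (by positivity) (by positivity)]
    congr 1
    rw [hC₁_def]
    ring
  -- far field estimate
  have hT2 : eLpNorm Δ q (volume.restrict A₂) ≤
      ENNReal.ofReal (C₂ * h * Real.log h⁻¹) := by
    have hptw : ∀ y ∈ A₂, |Δ y| ≤ c₅ * h * ‖x₁ - y‖ ^ (a - 1) := by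
      intro y hy
      have hr₁ : 2*h ≤ ‖x₁ - y‖ := hA₂r y hy
      have hr₂ : |‖x₂ - y‖ - ‖x₁ - y‖| ≤ h := by
        have habs := abs_norm_sub_norm_le (x₂ - y) (x₁ - y)
        have he : (x₂ - y) - (x₁ - y) = -(x₁ - x₂) := by abel
        rw [he, norm_neg] at habs
        exact habs
      have hm := aux_mvt ha_neg hpos hr₁ hr₂
      calc |Δ y| = |D| * |‖x₁ - y‖ ^ a - ‖x₂ - y‖ ^ a| := by
            simp only [hΔ_def]
            rw [hker, hker, ← mul_sub, abs_mul]
        _ ≤ |D| * ((|a| * 2 ^ (1-a) * ‖x₁ - y‖ ^ (a-1)) * h) :=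
            mul_le_mul_of_nonneg_left hm (abs_nonneg D)
        _ = c₅ * h * ‖x₁ - y‖ ^ (a-1) := by rw [hc₅_def]; ring
    have hA₂meas : MeasurableSet A₂ := measurableSet_ball.diff measurableSet_ball
    have hmono : eLpNorm Δ q (volume.restrict A₂) ≤
        eLpNorm (fun y => c₅ * h * ‖x₁ - y‖ ^ (a-1)) q (volume.restrict A₂) := by
      apply eLpNorm_mono_ae
      filter_upwards [ae_restrict_mem hA₂meas] with y hy
      rw [Real.norm_eq_abs, Real.norm_eq_abs,
        abs_of_nonneg (by positivity : (0:ℝ) ≤ c₅ * h * ‖x₁ - y‖ ^ (a-1))]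
      exact hptw y hy
    refine hmono.trans ?_
    have e3 : (fun y : EuclideanSpace ℝ (Fin N) => c₅ * h * ‖x₁ - y‖ ^ (a-1)) =
        (c₅ * h) • fun y => ‖x₁ - y‖ ^ (a-1) := by
      funext y
      simp [smul_eq_mul]
    rw [e3, eLpNorm_const_smul]
    have hsm : (‖c₅ * h‖ₑ : ℝ≥0∞) = ENNReal.ofReal (c₅ * h) := by
      rw [← ofReal_norm, Real.norm_eq_abs, abs_of_nonneg (by positivity)]
    rw [hsm]
    have hEf : eLpNorm (fun y => ‖x₁ - y‖ ^ (a-1)) q (volume.restrict A₂) ≤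
        ENNReal.ofReal (c₆ * Real.log h⁻¹) := by
      rw [aux_eLpNorm_nonneg_eq _ _ (fun y => Real.rpow_nonneg (norm_nonneg _) _) hq0 hq_ne_top]
      apply aux_pow_le hqr0 (by positivity)
      have heq : (∫⁻ y in A₂, ENNReal.ofReal ((‖x₁ - y‖ ^ (a-1)) ^ q.toReal)) =
          ∫⁻ y in A₂, ENNReal.ofReal (‖x₁ - y‖ ^ (-(N:ℝ))) := by
        refine lintegral_congr fun y => ?_
        rw [← Real.rpow_mul (norm_nonneg _), key_b]
      rw [heq]
      have hann : ∀ y ∈ A₂, 2*h ≤ ‖x₁ - y‖ ∧ ‖x₁ - y‖ ≤ 2*M := by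
        intro y hy
        refine ⟨hA₂r y hy, ?_⟩
        have hxM : ‖x₁‖ ≤ M := mem_closedBall_zero_iff.1 (hKM hx₁)
        have hyM : ‖y‖ ≤ M := mem_closedBall_zero_iff.1 (hBM hy.1)
        calc ‖x₁ - y‖ ≤ ‖x₁‖ + ‖y‖ := norm_sub_le _ _
          _ ≤ 2*M := by linarith
      have h2h : (0:ℝ) < 2*h := by positivity
      have h2hM : (2:ℝ)*h ≤ 2*M := by
        have : h ≤ 1/2 := hhalf
        linarith
      calc ∫⁻ y in A₂, ENNReal.ofReal (‖x₁ - y‖ ^ (-(N:ℝ)))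
          ≤ (volume : Measure (EuclideanSpace ℝ (Fin N))).toSphere univ *
              ENNReal.ofReal (Real.log ((2*M)/(2*h))) :=
            aux_lint_ker_annulus hN x₁ h2h h2hM hann
        _ ≤ ENNReal.ofReal ((c₆ * Real.log h⁻¹) ^ qr) := by
            rw [hSr_eq, ← ENNReal.ofReal_mul hSr0]
            apply ENNReal.ofReal_le_ofReal
            have hMh : (2*M)/(2*h) = M/h := by
              rw [mul_div_mul_left _ _ (two_ne_zero)]
            rw [hMh]
            have hlogMh : Real.log (M/h) = Real.log M + Real.log h⁻¹ := by
              rw [div_eq_mul_inv, Real.log_mul (ne_of_gt hM0) (ne_of_gt (inv_pos.2 hpos))]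
            have hL0 : 0 ≤ Real.log (M/h) := by rw [hlogMh]; linarith
            have h1c : 1 + Sr * Real.log (M/h) ≤ c₆ * Real.log h⁻¹ := by
              rw [hlogMh, hc₆_def]
              have e4 : (1/Real.log 2 + Sr * (Real.log M / Real.log 2 + 1)) * Real.log h⁻¹
                  = Real.log h⁻¹/Real.log 2 + Sr * Real.log M * (Real.log h⁻¹ / Real.log 2)
                    + Sr * Real.log h⁻¹ := by ring
              rw [e4]
              have f1 : 1 ≤ Real.log h⁻¹ / Real.log 2 := (one_le_div hlog2).2 hlogh
              have f2 : Sr * Real.log M ≤ Sr * Real.log M * (Real.log h⁻¹/Real.log 2) :=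
                le_mul_of_one_le_right (by positivity) f1
              have f0 : Sr * (Real.log M + Real.log h⁻¹) =
                  Sr * Real.log M + Sr * Real.log h⁻¹ := by ring
              linarith
            have hSL : 0 ≤ Sr * Real.log (M/h) := mul_nonneg hSr0 hL0
            calc Sr * Real.log (M/h) ≤ 1 + Sr * Real.log (M/h) := by linarith
              _ = (1 + Sr * Real.log (M/h)) ^ (1:ℝ) := (Real.rpow_one _).symm
              _ ≤ (1 + Sr * Real.log (M/h)) ^ qr :=
                  Real.rpow_le_rpow_of_exponent_le (by linarith) hqr1
              _ ≤ (c₆ * Real.log h⁻¹) ^ qr :=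
                  Real.rpow_le_rpow (by linarith) h1c (le_of_lt hqr0)
    calc ENNReal.ofReal (c₅ * h) * eLpNorm (fun y => ‖x₁ - y‖ ^ (a-1)) q (volume.restrict A₂)
        ≤ ENNReal.ofReal (c₅ * h) * ENNReal.ofReal (c₆ * Real.log h⁻¹) :=
          mul_le_mul_right hEf _
      _ = ENNReal.ofReal (C₂ * h * Real.log h⁻¹) := by
          rw [← ENNReal.ofReal_mul (by positivity)]
          congr 1
          rw [hC₂_def]
          ring
  -- combine
  refine hsplit.trans ((add_le_add hT1 hT2).trans ?_)
  rw [← ENNReal.ofReal_add (by positivity) (by positivity)]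
  apply ENNReal.ofReal_le_ofReal
  have hk : (1/Real.log 2) * Real.log 2 = 1 := by field_simp
  have hfin2 : C₁ * h ≤ (C₁/Real.log 2) * h * Real.log h⁻¹ := by
    calc C₁ * h = C₁ * h * ((1/Real.log 2) * Real.log 2) := by rw [hk, mul_one]
      _ ≤ C₁ * h * ((1/Real.log 2) * Real.log h⁻¹) := by
          refine mul_le_mul_of_nonneg_left ?_ (by positivity)
          exact mul_le_mul_of_nonneg_left hlogh (by positivity)
      _ = (C₁/Real.log 2) * h * Real.log h⁻¹ := by ring
  have he6 : C₀ * h * Real.log h⁻¹ =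
      (C₁/Real.log 2) * h * Real.log h⁻¹ + C₂ * h * Real.log h⁻¹ := by
    rw [hC₀_def]; ring
  linarith
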